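/- Let c, p : [0,∞) → ℝ be differentiable and satisfy c' = k1(e0 − c)(s0 − c − p) − k1·K_M·c and p' = k2·c with c(0) = 0, p(0) = 0, where k1, k−1, k2, e0, s0 > 0 and K_M = (k−1+k2)/k1. Assume 0 ≤ c(t) ≤ λ and 0 ≤ p(t) ≤ s0 for all t ≥ 0, where λ = ½(e0+K_M+s0) − ½√((e0+K_M+s0)² − 4e0·s0), and let h⁻(p) = ½(e0+K_M+s0−p) − ½√((e0+K_M+s0−p)² − 4e0(s0−p)) and ε_ = K_M/(e0 − λ). Then for all t ≥ 0: |c(t) − h⁻(p(t))| ≤ λ·(exp(−k2·t/(2ε_)) + ε_). -/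

import Mathlib

open Filter Set Real Topology

lemma abs_slope_freq {z : ℝ → ℝ} {x dz r : ℝ}
    (hz : HasDerivAt z dz x)
    (hr : (if z x < 0 then -dz else if z x = 0 then |dz| else dz) < r) :
    ∃ᶠ y in 𝓝[>] x, (y - x)⁻¹ * (|z y| - |z x|) < r := by
  have hslope : Tendsto (slope z x) (𝓝[>] x) (𝓝 dz) :=
    (hasDerivAt_iff_tendsto_slope.1 hz).mono_left
      (nhdsWithin_mono x fun y hy => ne_of_gt hy)
  have hpos : ∀ᶠ y in 𝓝[>] x, x < y := eventually_mem_nhdsWithin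
  split_ifs at hr with h1 h2
  · -- z x < 0
    have hcont : ∀ᶠ y in 𝓝[>] x, z y < 0 :=
      eventually_nhdsWithin_of_eventually_nhds
        (hz.continuousAt.eventually_lt_const h1)
    have hlt : ∀ᶠ y in 𝓝[>] x, -slope z x y < r :=
      hslope.neg.eventually_lt_const hr
    refine ((hcont.and hlt).and hpos).frequently.mono ?_
    rintro y ⟨⟨hy0, hyr⟩, hxy⟩
    have : (y - x)⁻¹ * (|z y| - |z x|) = -slope z x y := by
      rw [abs_of_neg hy0, abs_of_neg h1, slope_def_field]
      field_simp
      ring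
    rw [this]; exact hyr
  · -- z x = 0
    have hlt : ∀ᶠ y in 𝓝[>] x, |slope z x y| < r :=
      hslope.abs.eventually_lt_const hr
    refine (hlt.and hpos).frequently.mono ?_
    rintro y ⟨hyr, hxy⟩
    have : (y - x)⁻¹ * (|z y| - |z x|) ≤ |slope z x y| := by
      rw [h2, abs_zero, sub_zero, slope_def_field, abs_div,
        abs_of_pos (by linarith : (0:ℝ) < y - x), h2, sub_zero, div_eq_inv_mul]
    exact lt_of_le_of_lt this hyr
  · -- z x > 0
    have h3 : 0 < z x := lt_of_le_of_ne (not_lt.1 h1) (Ne.symm h2)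
    have hcont : ∀ᶠ y in 𝓝[>] x, 0 < z y :=
      eventually_nhdsWithin_of_eventually_nhds
        (hz.continuousAt.eventually_const_lt h3)
    have hlt : ∀ᶠ y in 𝓝[>] x, slope z x y < r :=
      hslope.eventually_lt_const hr
    refine ((hcont.and hlt).and hpos).frequently.mono ?_
    rintro y ⟨⟨hy0, hyr⟩, hxy⟩
    have : (y - x)⁻¹ * (|z y| - |z x|) = slope z x y := by
      rw [abs_of_pos hy0, abs_of_pos h3, slope_def_field, div_eq_inv_mul]
    rw [this]; exact hyr

lemma abs_le_decay_bound {z dz : ℝ → ℝ} {K M δ : ℝ} (hK : 0 < K) (hM : 0 ≤ M)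
    (hz : ∀ t, 0 ≤ t → HasDerivAt z (dz t) t)
    (hb : ∀ t, 0 ≤ t → ∃ a r, K ≤ a ∧ |r| ≤ M ∧ dz t = -(a * z t) + r)
    (h0 : |z 0| ≤ δ) :
    ∀ t, 0 ≤ t → |z t| ≤ δ * Real.exp (-K * t) + M / K := by
  intro t ht
  set φ : ℝ → ℝ := fun x => if z x < 0 then -dz x else if z x = 0 then |dz x| else dz x with hφ
  have main := le_gronwallBound_of_liminf_deriv_right_le (f := fun s => |z s|) (f' := φ)
    (δ := δ) (K := -K) (ε := M) (a := 0) (b := t)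
    (fun s hs => ((hz s hs.1).continuousAt.abs).continuousWithinAt)
    (fun x hx r hr => abs_slope_freq (hz x hx.1) hr)
    h0
    (fun x hx => by
      obtain ⟨a, r, hKa, hrM, hdz⟩ := hb x hx.1
      have habs := abs_le.1 hrM
      simp only [hφ]
      split_ifs with h1 h2
      · rw [abs_of_neg h1]; nlinarith
      · rw [h2, abs_zero, mul_zero, zero_add, hdz, h2, mul_zero, neg_zero, zero_add]
        exact hrM
      · have h3 : 0 < z x := lt_of_le_of_ne (not_lt.1 h1) (Ne.symm h2)
        rw [abs_of_pos h3]; nlinarith)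
    t ⟨ht, le_refl t⟩
  rw [sub_zero, gronwallBound_of_K_ne_0 (neg_ne_zero.2 hK.ne')] at main
  refine main.trans ?_
  have hE1 : Real.exp (-K * t) ≤ 1 := Real.exp_le_one_iff.2 (by nlinarith)
  have hE0 : 0 < Real.exp (-K * t) := Real.exp_pos _
  simp only
  have : M / -K * (Real.exp (-K * t) - 1) = M / K * (1 - Real.exp (-K * t)) := by
    rw [div_neg]; ring
  rw [this]
  have hMK : 0 ≤ M / K := div_nonneg hM hK.le
  nlinarith

set_option maxHeartbeats 1600000 in
theorem tQSSA_dimensionless_bound (k1 km1 k2 e0 s0 KM lam ε : ℝ)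
    (hk1 : 0 < k1) (hkm1 : 0 < km1) (hk2 : 0 < k2) (he0 : 0 < e0) (hs0 : 0 < s0)
    (hKM : KM = (km1 + k2) / k1)
    (hlam : lam = (e0 + KM + s0) / 2 - Real.sqrt ((e0 + KM + s0) ^ 2 - 4 * e0 * s0) / 2)
    (hε : ε = KM / (e0 - lam))
    (c p : ℝ → ℝ)
    (hc : ∀ t : ℝ, 0 ≤ t →
      HasDerivAt c (k1 * (e0 - c t) * (s0 - c t - p t) - k1 * KM * c t) t)
    (hp : ∀ t : ℝ, 0 ≤ t → HasDerivAt p (k2 * c t) t)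
    (hc0 : c 0 = 0) (hp0 : p 0 = 0)
    (hcb : ∀ t : ℝ, 0 ≤ t → 0 ≤ c t ∧ c t ≤ lam)
    (hpb : ∀ t : ℝ, 0 ≤ t → 0 ≤ p t ∧ p t ≤ s0) :
    ∀ t : ℝ, 0 ≤ t →
      |c t - ((e0 + KM + s0 - p t) / 2
          - Real.sqrt ((e0 + KM + s0 - p t) ^ 2 - 4 * e0 * (s0 - p t)) / 2)| ≤
        lam * (Real.exp (-(k2 * t) / (2 * ε)) + ε) := by
  have hKM0 : 0 < KM := by rw [hKM]; positivity
  set S : ℝ := e0 + KM + s0 with hS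
  set g : ℝ → ℝ := fun q => (S - q) ^ 2 - 4 * e0 * (s0 - q) with hg
  set H : ℝ → ℝ := fun q => (S - q) / 2 - Real.sqrt (g q) / 2 with hHdef
  have hgpos : ∀ q ∈ Set.Icc (0:ℝ) s0, (0:ℝ) < g q := by
    intro q hq
    simp only [hg, hS]
    nlinarith [sq_nonneg (e0 - (s0 - q)), hq.1, hq.2]
  have hsq : ∀ q ∈ Set.Icc (0:ℝ) s0, Real.sqrt (g q) ^ 2 = g q := fun q hq =>
    Real.sq_sqrt (hgpos q hq).le
  have hsqpos : ∀ q ∈ Set.Icc (0:ℝ) s0, 0 < Real.sqrt (g q) := fun q hq =>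
    Real.sqrt_pos.2 (hgpos q hq)
  -- key: (S - q - 2 e0)^2 < g q, hence S - q - 2 e0 < sqrt (g q)
  have hkey : ∀ q ∈ Set.Icc (0:ℝ) s0, S - q - 2 * e0 < Real.sqrt (g q) := by
    intro q hq
    have h1 := hsq q hq
    have h2 := hsqpos q hq
    simp only [hg, hS] at h1 ⊢
    nlinarith [sq_nonneg (e0 + KM + s0 - q - 2 * e0 - Real.sqrt ((e0 + KM + s0 - q) ^ 2 - 4 * e0 * (s0 - q)))]
  have hHlt : ∀ q ∈ Set.Icc (0:ℝ) s0, H q < e0 := by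
    intro q hq
    have := hkey q hq
    have h2 := hsqpos q hq
    simp only [hHdef]
    linarith
  have hHpos : ∀ q ∈ Set.Icc (0:ℝ) s0, 0 ≤ H q := by
    intro q hq
    have h1 : Real.sqrt (g q) ≤ Real.sqrt ((S - q) ^ 2) := by
      apply Real.sqrt_le_sqrt
      simp only [hg]
      nlinarith [hq.2, he0]
    rw [Real.sqrt_sq (by simp only [hS]; nlinarith [hq.2, hKM0] : (0:ℝ) ≤ S - q)] at h1
    simp only [hHdef]
    linarith
  have hplt : ∀ q ∈ Set.Icc (0:ℝ) s0, e0 < (S - q) / 2 + Real.sqrt (g q) / 2 := by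
    intro q hq
    have hlt := hHlt q hq
    have h1 := hsq q hq
    simp only [hHdef] at hlt
    simp only [hg, hS] at h1 ⊢
    simp only [hg, hS] at hlt
    nlinarith [mul_pos he0 hKM0]
  -- derivative of H
  set dH : ℝ → ℝ := fun q =>
    (-1) / 2 - 1 / (2 * Real.sqrt (g q)) * (2 * (S - q) * (-1) - 4 * e0 * (-1)) / 2 with hdH
  have hHderiv : ∀ q ∈ Set.Icc (0:ℝ) s0, HasDerivAt H (dH q) q := by
    intro q hq
    have h1 : HasDerivAt (fun y : ℝ => S - y) (-1) q := (hasDerivAt_id q).const_sub S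
    have h2 : HasDerivAt (fun y : ℝ => (S - y) ^ 2) (2 * (S - q) * (-1)) q := by
      have := h1.pow 2
      norm_num at this
      exact this.congr_deriv (by ring)
    have h3 : HasDerivAt (fun y : ℝ => 4 * e0 * (s0 - y)) (4 * e0 * (-1)) q := by
      simpa using ((hasDerivAt_id q).const_sub s0).const_mul (4 * e0)
    have hgd : HasDerivAt g (2 * (S - q) * (-1) - 4 * e0 * (-1)) q := h2.sub h3
    have hsqrt : HasDerivAt (fun y => Real.sqrt (g y))
        (1 / (2 * Real.sqrt (g q)) * (2 * (S - q) * (-1) - 4 * e0 * (-1))) q :=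
      (Real.hasDerivAt_sqrt (hgpos q hq).ne').comp q hgd
    exact (h1.div_const 2).sub (hsqrt.div_const 2)
  -- dH q = -((e0 - H q)/sqrt (g q))
  have hdHeq : ∀ q ∈ Set.Icc (0:ℝ) s0, dH q = -((e0 - H q) / Real.sqrt (g q)) := by
    intro q hq
    have h2 := (hsqpos q hq).ne'
    simp only [hdH, hHdef]
    field_simp
    ring
  have hdH0 : ∀ q ∈ Set.Icc (0:ℝ) s0, 0 ≤ -dH q := by
    intro q hq
    rw [hdHeq q hq, neg_neg]
    exact div_nonneg (by linarith [hHlt q hq]) (hsqpos q hq).le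
  have hdH1 : ∀ q ∈ Set.Icc (0:ℝ) s0, -dH q ≤ 1 := by
    intro q hq
    rw [hdHeq q hq, neg_neg]
    rw [div_le_one (hsqpos q hq)]
    have := hplt q hq
    simp only [hHdef]
    linarith
  -- H is antitone on [0, s0]
  have hHanti : AntitoneOn H (Set.Icc 0 s0) := by
    apply antitoneOn_of_deriv_nonpos (convex_Icc 0 s0)
    · exact fun q hq => (hHderiv q hq).continuousAt.continuousWithinAt
    · intro q hq
      rw [interior_Icc] at hq
      exact (hHderiv q (Set.Ioo_subset_Icc_self hq)).differentiableAt.differentiableWithinAt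
    · intro q hq
      rw [interior_Icc] at hq
      have hq' := Set.Ioo_subset_Icc_self hq
      rw [(hHderiv q hq').deriv]
      linarith [hdH0 q hq']
  have h0mem : (0:ℝ) ∈ Set.Icc (0:ℝ) s0 := ⟨le_refl 0, hs0.le⟩
  have hlam0 : lam = H 0 := by
    simp only [hHdef, hg, hS]
    rw [hlam, hS]
    norm_num
  have hlamlt : lam < e0 := by rw [hlam0]; exact hHlt 0 h0mem
  have hlampos : 0 ≤ lam := by rw [hlam0]; exact hHpos 0 h0mem
  have hel : 0 < e0 - lam := by linarith
  have hεpos : 0 < ε := by rw [hε]; exact div_pos hKM0 hel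
  set K : ℝ := k1 * (e0 - lam) with hKdef
  set M : ℝ := k2 * lam with hMdef
  have hKpos : 0 < K := mul_pos hk1 hel
  have hMnn : 0 ≤ M := mul_nonneg hk2.le hlampos
  set z : ℝ → ℝ := fun t => c t - H (p t) with hzdef
  set dz : ℝ → ℝ := fun t =>
    (k1 * (e0 - c t) * (s0 - c t - p t) - k1 * KM * c t) - dH (p t) * (k2 * c t) with hdzdef
  have hqmem : ∀ t : ℝ, 0 ≤ t → p t ∈ Set.Icc (0:ℝ) s0 := fun t ht =>
    ⟨(hpb t ht).1, (hpb t ht).2⟩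
  have hzd : ∀ t, 0 ≤ t → HasDerivAt z (dz t) t := by
    intro t ht
    exact (hc t ht).sub ((hHderiv (p t) (hqmem t ht)).comp t (hp t ht))
  have hb : ∀ t, 0 ≤ t → ∃ a r, K ≤ a ∧ |r| ≤ M ∧ dz t = -(a * z t) + r := by
    intro t ht
    have hqm := hqmem t ht
    refine ⟨k1 * ((S - p t) / 2 + Real.sqrt (g (p t)) / 2 - c t), -(dH (p t)) * (k2 * c t),
      ?_, ?_, ?_⟩
    · have h1 := hplt (p t) hqm
      have h2 := (hcb t ht).2
      simp only [hKdef]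
      nlinarith
    · have h1 := hdH0 (p t) hqm
      have h2 := hdH1 (p t) hqm
      have h3 := (hcb t ht).1
      have h4 := (hcb t ht).2
      rw [abs_of_nonneg (by positivity)]
      simp only [hMdef]
      have h5 : -dH (p t) * (k2 * c t) ≤ 1 * (k2 * c t) :=
        mul_le_mul_of_nonneg_right h2 (by positivity)
      have h6 : k2 * c t ≤ k2 * lam := mul_le_mul_of_nonneg_left h4 hk2.le
      linarith [h5, h6]
    · have h1 := hsq (p t) hqm
      simp only [hg, hS] at h1
      show (k1 * (e0 - c t) * (s0 - c t - p t) - k1 * KM * c t) - dH (p t) * (k2 * c t) =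
        -(k1 * ((S - p t) / 2 + Real.sqrt (g (p t)) / 2 - c t) *
          (c t - ((S - p t) / 2 - Real.sqrt (g (p t)) / 2))) + -(dH (p t)) * (k2 * c t)
      simp only [hg, hS]
      linear_combination (k1 / 4) * h1
  have h0 : |z 0| ≤ lam := by
    simp only [hzdef, hc0, hp0, ← hlam0, zero_sub, abs_neg, abs_of_nonneg hlampos]
    exact le_refl lam
  have key := abs_le_decay_bound hKpos hMnn hzd hb h0
  intro t ht
  have hzk := key t ht
  -- exponent comparison
  have hk1KM : k1 * KM = km1 + k2 := by rw [hKM]; field_simp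
  have hexp : Real.exp (-K * t) ≤ Real.exp (-(k2 * t) / (2 * ε)) := by
    apply Real.exp_le_exp.2
    have h2ε : (0:ℝ) < 2 * ε := by positivity
    rw [neg_mul, neg_div, neg_le_neg_iff, div_le_iff₀ h2ε]
    have he1 : K * t * (2 * ε) = 2 * (k1 * KM) * t := by
      rw [hKdef, hε]; field_simp
    rw [he1, hk1KM]
    nlinarith [ht]
  have hMK : M / K ≤ lam * ε := by
    rw [div_le_iff₀ hKpos, hMdef, hKdef, hε]
    have he2 : lam * (KM / (e0 - lam)) * (k1 * (e0 - lam)) = lam * (k1 * KM) := by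
      field_simp
    rw [he2, hk1KM]
    nlinarith [hlampos]
  have hfin : |z t| ≤ lam * (Real.exp (-(k2 * t) / (2 * ε)) + ε) := by
    have h1 : lam * Real.exp (-K * t) ≤ lam * Real.exp (-(k2 * t) / (2 * ε)) :=
      mul_le_mul_of_nonneg_left hexp hlampos
    calc |z t| ≤ lam * Real.exp (-K * t) + M / K := hzk
      _ ≤ lam * Real.exp (-(k2 * t) / (2 * ε)) + lam * ε := add_le_add h1 hMK
      _ = lam * (Real.exp (-(k2 * t) / (2 * ε)) + ε) := by ring
  have heq : (S - p t) / 2 - Real.sqrt ((S - p t) ^ 2 - 4 * e0 * (s0 - p t)) / 2 = H (p t) := rfl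
  rw [heq]
  exact hfin
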